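/- Let S be a subspace of ℝᵐ and T₀ : S → ℝᵐ a linear map that is an isometry onto its image T₀(S). Assume there is no nonzero v ∈ S with T₀v = -v. Then there exists a linear isometry T of ℝᵐ extending T₀ whose only possible real eigenvalue is 1. -/

import Mathlib

open scoped InnerProductSpace

/-- A linear isometry `T₀` from a subspace `S ⊆ ℝᵐ` into `ℝᵐ` with no nonzero vector
`v ∈ S` satisfying `T₀ v = -v` extends to a linear isometry of `ℝᵐ` whose only possible
real eigenvalue is `1`. -/
theorem stmt_4 {m : ℕ} (S : Submodule ℝ (EuclideanSpace ℝ (Fin m)))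
    (T₀ : S →ₗ[ℝ] EuclideanSpace ℝ (Fin m))
    (hiso : ∀ u v : S, ⟪T₀ u, T₀ v⟫_ℝ = ⟪(u : EuclideanSpace ℝ (Fin m)), (v : EuclideanSpace ℝ (Fin m))⟫_ℝ)
    (hev : ∀ v : S, T₀ v = -(v : EuclideanSpace ℝ (Fin m)) → v = 0) :
    ∃ T : EuclideanSpace ℝ (Fin m) ≃ₗᵢ[ℝ] EuclideanSpace ℝ (Fin m),
      (∀ v : S, T (v : EuclideanSpace ℝ (Fin m)) = T₀ v) ∧
      ∀ (lam : ℝ) (v : EuclideanSpace ℝ (Fin m)), v ≠ 0 → T v = lam • v → lam = 1 := by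
    classical
  set E := EuclideanSpace ℝ (Fin m) with hE
  let L : S →ₗ[ℝ] E := S.subtype + T₀
  let M : S →ₗ[ℝ] E := S.subtype - T₀
  have hLapp : ∀ v : S, L v = (v : E) + T₀ v := fun v => rfl
  have hMapp : ∀ v : S, M v = (v : E) - T₀ v := fun v => rfl
  have hLinj : Function.Injective L := by
    rw [← LinearMap.ker_eq_bot, LinearMap.ker_eq_bot']
    intro v hv
    apply hev
    have h : (v : E) + T₀ v = 0 := hv
    exact eq_neg_of_add_eq_zero_left (by rwa [add_comm] at h)
  -- key skew identity
  have key : ∀ v u : S, ⟪M v, L u⟫_ℝ = -⟪L v, M u⟫_ℝ := by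
    intro v u
    simp only [hLapp, hMapp, inner_add_right, inner_sub_left, inner_add_left, inner_sub_right,
      hiso]
    ring
  let S' : Submodule ℝ E := LinearMap.range L
  let eL : S ≃ₗ[ℝ] S' := LinearEquiv.ofInjective L hLinj
  let P : E →ₗ[ℝ] S' := (S'.orthogonalProjectionOnto : E →L[ℝ] S').toLinearMap
  let g : E →ₗ[ℝ] S := eL.symm.toLinearMap.comp P
  have hLg : ∀ x : E, L (g x) = ((P x : S') : E) := by
    intro x
    have : (eL (eL.symm (P x)) : E) = ((P x : S') : E) := by rw [eL.apply_symm_apply]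
    rw [← this]
    rfl
  have hgL : ∀ v : S, g (L v) = v := by
    intro v
    have hmem : L v ∈ S' := LinearMap.mem_range_self L v
    have hproj : P (L v) = eL v := by
      apply Subtype.ext
      have h1 : ((P (L v) : S') : E) = L v := Submodule.starProjection_eq_self_iff.mpr hmem
      have h2 : ((eL v : S') : E) = L v := LinearEquiv.ofInjective_apply L v
      rw [h1, h2]
    show eL.symm (P (L v)) = v
    rw [hproj, eL.symm_apply_apply]
  let B : E →ₗ[ℝ] E := M.comp g
  let Q : E →ₗ[ℝ] E := S'.subtype.comp P
  have hQself : ∀ x y : E, ⟪Q x, y⟫_ℝ = ⟪x, Q y⟫_ℝ := by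
    intro x y
    exact Submodule.inner_starProjection_left_eq_right S' x y
  have hQL : ∀ x : E, Q x = L (g x) := fun x => (hLg x).symm
  have hBQ : ∀ x y : E, ⟪Q x, B y⟫_ℝ = -⟪B x, Q y⟫_ℝ := by
    intro x y
    rw [hQL x, hQL y]
    show ⟪L (g x), M (g y)⟫_ℝ = -⟪M (g x), L (g y)⟫_ℝ
    rw [key (g x) (g y)]; ring
  let Bad : E →ₗ[ℝ] E := LinearMap.adjoint B
  let A : E →ₗ[ℝ] E := B - Bad - Q.comp B
  have hAapp : ∀ x : E, A x = B x - Bad x - Q (B x) := fun x => rfl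
  have skew : ∀ x y : E, ⟪A x, y⟫_ℝ = -⟪x, A y⟫_ℝ := by
    intro x y
    rw [hAapp, hAapp]
    rw [inner_sub_left, inner_sub_left, inner_sub_right, inner_sub_right]
    rw [LinearMap.adjoint_inner_left, LinearMap.adjoint_inner_right]
    have h1 : ⟪Q (B x), y⟫_ℝ = ⟪B x, Q y⟫_ℝ := hQself _ _
    have h2 : ⟪x, Q (B y)⟫_ℝ = ⟪Q x, B y⟫_ℝ := (hQself _ _).symm
    rw [h1, h2, hBQ x y]
    ring
  have skewself : ∀ x : E, ⟪A x, x⟫_ℝ = 0 := by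
    intro x
    have h := skew x x
    rw [real_inner_comm x (A x)] at h
    rw [real_inner_comm]
    linarith [skew x x, real_inner_comm x (A x)]
  have hAL : ∀ v : S, A (L v) = M v := by
    intro v
    have hQLv : Q (L v) = L v := by rw [hQL, hgL]
    have hBLv : B (L v) = M v := by show M (g (L v)) = M v; rw [hgL]
    have hBadLv : Bad (L v) = -(Q (M v)) := by
      apply ext_inner_right ℝ
      intro y
      rw [LinearMap.adjoint_inner_left]
      have : ⟪L v, B y⟫_ℝ = ⟪Q (L v), B y⟫_ℝ := by rw [hQLv]
      rw [this, hBQ (L v) y, hBLv, inner_neg_left, hQself]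
    rw [hAapp, hBLv, hBadLv, sub_neg_eq_add, add_sub_cancel_right]
  -- Cayley transform
  let F : E →ₗ[ℝ] E := LinearMap.id + A
  let G : E →ₗ[ℝ] E := LinearMap.id - A
  have hFapp : ∀ x : E, F x = x + A x := fun x => rfl
  have hGapp : ∀ x : E, G x = x - A x := fun x => rfl
  have hFinner : ∀ x : E, ⟪F x, x⟫_ℝ = ‖x‖ ^ 2 := by
    intro x
    rw [hFapp, inner_add_left, skewself, real_inner_self_eq_norm_sq]
    ring
  have hFinj : Function.Injective F := by
    rw [← LinearMap.ker_eq_bot, LinearMap.ker_eq_bot']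
    intro x hx
    have h := hFinner x
    rw [hx, inner_zero_left] at h
    have : ‖x‖ = 0 := by nlinarith [norm_nonneg x]
    exact norm_eq_zero.mp this
  have hFbij : Function.Bijective F :=
    ⟨hFinj, (LinearMap.injective_iff_surjective).mp hFinj⟩
  let eF : E ≃ₗ[ℝ] E := LinearEquiv.ofBijective F hFbij
  let Tlin : E →ₗ[ℝ] E := G.comp (eF.symm : E ≃ₗ[ℝ] E).toLinearMap
  have hTlinapp : ∀ x : E, Tlin x = G (eF.symm x) := fun x => rfl
  have hGF : ∀ y : E, ‖G y‖ = ‖F y‖ := by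
    intro y
    have h1 : ⟪G y, G y⟫_ℝ = ⟪F y, F y⟫_ℝ := by
      rw [hGapp, hFapp, inner_sub_left, inner_sub_right, inner_sub_right,
        inner_add_left, inner_add_right, inner_add_right, skewself]
      have h3 : ⟪y, A y⟫_ℝ = 0 := by rw [real_inner_comm]; exact skewself y
      rw [h3]; ring
    have h4 : ‖G y‖ * ‖G y‖ = ‖F y‖ * ‖F y‖ := by
      rw [← real_inner_self_eq_norm_mul_norm, ← real_inner_self_eq_norm_mul_norm, h1]
    nlinarith [norm_nonneg (G y), norm_nonneg (F y)]
  have hTnorm : ∀ x : E, ‖Tlin x‖ = ‖x‖ := by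
    intro x
    rw [hTlinapp, hGF]
    congr 1
    exact eF.apply_symm_apply x
  let TI : E →ₗᵢ[ℝ] E := ⟨Tlin, hTnorm⟩
  have hGinj : Function.Injective G := by
    rw [← LinearMap.ker_eq_bot, LinearMap.ker_eq_bot']
    intro x hx
    have h : ⟪G x, x⟫_ℝ = ‖x‖ ^ 2 := by
      rw [hGapp, inner_sub_left, skewself, real_inner_self_eq_norm_sq]; ring
    rw [hx, inner_zero_left] at h
    have : ‖x‖ = 0 := by nlinarith [norm_nonneg x]
    exact norm_eq_zero.mp this
  have hGsurj : Function.Surjective G := (LinearMap.injective_iff_surjective).mp hGinj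
  have hTsurj : Function.Surjective TI := by
    intro z
    obtain ⟨y, hy⟩ := hGsurj z
    exact ⟨eF y, by show Tlin (eF y) = z; rw [hTlinapp, eF.symm_apply_apply, hy]⟩
  let T : E ≃ₗᵢ[ℝ] E := LinearIsometryEquiv.ofSurjective TI hTsurj
  have hTapp : ∀ x : E, T x = Tlin x := by
    intro x
    show (LinearIsometryEquiv.ofSurjective TI hTsurj) x = Tlin x
    rw [LinearIsometryEquiv.coe_ofSurjective]
    rfl
  have hText : ∀ v : S, T (v : E) = T₀ v := by
    intro v
    have hFL : F (L v) = (2 : ℝ) • (v : E) := by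
      rw [hFapp, hAL, hLapp, hMapp]
      module
    have hsymm : eF.symm ((2 : ℝ) • (v : E)) = L v := by
      rw [← hFL]
      exact eF.symm_apply_apply (L v)
    have hGL : G (L v) = (2 : ℝ) • T₀ v := by
      rw [hGapp, hAL, hLapp, hMapp]
      module
    have h2 : T ((2 : ℝ) • (v : E)) = (2 : ℝ) • T₀ v := by
      rw [hTapp, hTlinapp, hsymm, hGL]
    rw [map_smul] at h2
    have := smul_right_injective E (by norm_num : (2 : ℝ) ≠ 0) h2
    exact this
  refine ⟨T, hText, ?_⟩
  intro lam v hv hTv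
  have hnorm : ‖T v‖ = ‖v‖ := T.norm_map v
  rw [hTv, norm_smul] at hnorm
  have hvn : ‖v‖ ≠ 0 := norm_ne_zero_iff.mpr hv
  have habs : |lam| = 1 := by
    have h6 : ‖lam‖ * ‖v‖ = 1 * ‖v‖ := by rw [one_mul]; exact hnorm
    have h7 := mul_right_cancel₀ hvn h6
    rwa [Real.norm_eq_abs] at h7
  have hsq : lam ^ 2 = 1 := by
    rw [← sq_abs, habs]; norm_num
  have hcase : lam = 1 ∨ lam = -1 := by
    have hz : (lam - 1) * (lam + 1) = 0 := by nlinarith [hsq]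
    rcases mul_eq_zero.mp hz with h | h
    · left; linarith
    · right; linarith
  rcases hcase with h1 | h1
  · exact h1
  · exfalso
    have hTvv : T v = -v := by rw [hTv, h1, neg_one_smul]
    set y := eF.symm v with hy
    have hvF : F y = v := eF.apply_symm_apply v
    have hGy : G y = -v := by
      rw [← hTvv, hTapp, hTlinapp, ← hy]
    have hy0 : (2 : ℝ) • y = 0 := by
      have : G y + F y = (2 : ℝ) • y := by
        rw [hGapp, hFapp]; module
      rw [hGy, hvF] at this
      rw [← this]; abel
    have : y = 0 := by
      have := smul_right_injective E (by norm_num : (2 : ℝ) ≠ 0) (hy0.trans (smul_zero (2:ℝ)).symm)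
      exact this
    apply hv
    rw [← hvF, this, map_zero]
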